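/- Let g = a ⊕ n be a metric solvable Lie algebra with a abelian, n the nilradical, the decomposition orthogonal, and suppose ad A|_n is a normal operator on n for every A ∈ a. Then for any A ∈ a and X ∈ n, the Ricci operator satisfies ⟨Ric A, X⟩ = 0, and ⟨Ric A, A⟩ = − tr S(ad A|_n)², where S denotes the symmetric part. In particular Ric preserves the decomposition a ⊕ n. -/

import Mathlib

open scoped RealInnerProductSpace

variable {E : Type*} [NormedAddCommGroup E] [InnerProductSpace ℝ E]
  [FiniteDimensional ℝ E]

/-- Iterated bracket `[v k, [v (k-1), [..., v 0]]]`, used to express nilpotency. -/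
def iterBr (br : E →ₗ[ℝ] E →ₗ[ℝ] E) : ℕ → (ℕ → E) → E
  | 0, v => v 0
  | (k+1), v => br (v (k+1)) (iterBr br k v)

/-- The Ricci form `⟨Ric x, y⟩ = ⟨(M - (1/2)B - S(ad H))x, y⟩` of a metric Lie
algebra, relative to an orthonormal basis `b` and mean curvature vector `Hm`. -/
noncomputable def ricForm {N : ℕ} (br : E →ₗ[ℝ] E →ₗ[ℝ] E)
    (b : OrthonormalBasis (Fin N) ℝ E) (Hm : E) (x y : E) : ℝ :=
  -(1/2) * ∑ i, ∑ j, ⟪br x (b i), b j⟫ * ⟪br y (b i), b j⟫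
  + (1/4) * ∑ i, ∑ j, ⟪br (b i) (b j), x⟫ * ⟪br (b i) (b j), y⟫
  - (1/2) * LinearMap.trace ℝ E (br x ∘ₗ br y)
  - (1/2) * (⟪br Hm x, y⟫ + ⟪x, br Hm y⟫)

section Aux

set_option linter.unusedSectionVars false

lemma trace_eq_sum_inner'' {F : Type*} [NormedAddCommGroup F] [InnerProductSpace ℝ F]
    [FiniteDimensional ℝ F] {ι : Type*} [Fintype ι] [DecidableEq ι]
    (b : OrthonormalBasis ι ℝ F) (f : F →ₗ[ℝ] F) :
    LinearMap.trace ℝ F f = ∑ i, ⟪b i, f (b i)⟫ := by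
  rw [LinearMap.trace_eq_matrix_trace ℝ b.toBasis f]
  simp [Matrix.trace, Matrix.diag, LinearMap.toMatrix_apply,
    OrthonormalBasis.coe_toBasis_repr_apply, OrthonormalBasis.repr_apply_apply,
    OrthonormalBasis.coe_toBasis]

lemma trace_adjoint'' {F : Type*} [NormedAddCommGroup F] [InnerProductSpace ℝ F]
    [FiniteDimensional ℝ F] (f : F →ₗ[ℝ] F) :
    LinearMap.trace ℝ F (LinearMap.adjoint f) = LinearMap.trace ℝ F f := by
  let b := stdOrthonormalBasis ℝ F
  rw [trace_eq_sum_inner'' b, trace_eq_sum_inner'' b]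
  congr 1; ext i
  rw [real_inner_comm, LinearMap.adjoint_inner_left]

/-- An invariant subspace of a normal operator is invariant under the adjoint. -/
lemma normal_adj_invariant {F : Type*} [NormedAddCommGroup F] [InnerProductSpace ℝ F]
    [FiniteDimensional ℝ F] (T : F →ₗ[ℝ] F)
    (hn : T ∘ₗ LinearMap.adjoint T = LinearMap.adjoint T ∘ₗ T)
    (W : Submodule ℝ F) (hW : ∀ x ∈ W, T x ∈ W) :
    ∀ x ∈ W, LinearMap.adjoint T x ∈ W := by
  have cyc : ∀ u w : F →ₗ[ℝ] F, LinearMap.trace ℝ F (u ∘ₗ w) = LinearMap.trace ℝ F (w ∘ₗ u) :=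
    fun u w => LinearMap.trace_comp_comm' w u
  set π : F →ₗ[ℝ] F := W.subtype ∘ₗ (Submodule.orthogonalProjectionOnto W : F →L[ℝ] W).toLinearMap with hπ
  have hπmem : ∀ x : F, π x ∈ W := fun x => (Submodule.orthogonalProjectionOnto W x).2
  have hπid : ∀ x ∈ W, π x = x := by
    intro x hx
    simp only [hπ, LinearMap.comp_apply, ContinuousLinearMap.coe_coe, Submodule.coe_subtype]
    exact Submodule.starProjection_eq_self_iff.mpr hx
  have hππ : π ∘ₗ π = π := by ext x; exact hπid _ (hπmem x)
  have hπadj : LinearMap.adjoint π = π :=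
    ((LinearMap.eq_adjoint_iff π π).mpr fun x y =>
      Submodule.inner_starProjection_left_eq_right W x y).symm
  have hinv : T ∘ₗ π = π ∘ₗ (T ∘ₗ π) := by
    ext x; exact (hπid _ (hW _ (hπmem x))).symm
  set Ta : F →ₗ[ℝ] F := LinearMap.adjoint T with hTa
  set C : F →ₗ[ℝ] F := Ta ∘ₗ π - π ∘ₗ (Ta ∘ₗ π) with hC
  have hCa : LinearMap.adjoint C = π ∘ₗ T - π ∘ₗ (T ∘ₗ π) := by
    rw [hC, map_sub]
    rw [show LinearMap.adjoint (Ta ∘ₗ π) = π ∘ₗ T by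
      rw [LinearMap.adjoint_comp, hπadj, hTa, LinearMap.adjoint_adjoint]]
    rw [show LinearMap.adjoint (π ∘ₗ (Ta ∘ₗ π)) = (π ∘ₗ T) ∘ₗ π by
      rw [LinearMap.adjoint_comp, LinearMap.adjoint_comp, hπadj, hTa,
        LinearMap.adjoint_adjoint]]
    simp only [LinearMap.comp_assoc]
  have hCzero : C = 0 := by
    have htr : LinearMap.trace ℝ F (LinearMap.adjoint C ∘ₗ C) = 0 := by
      rw [hCa, hC]
      have hππ2 : ∀ g : F →ₗ[ℝ] F, π ∘ₗ (π ∘ₗ g) = π ∘ₗ g := fun g => by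
        rw [← LinearMap.comp_assoc, hππ]
      have expand : (π ∘ₗ T - π ∘ₗ (T ∘ₗ π)) ∘ₗ (Ta ∘ₗ π - π ∘ₗ (Ta ∘ₗ π))
          = π ∘ₗ (T ∘ₗ (Ta ∘ₗ π)) - π ∘ₗ (T ∘ₗ (π ∘ₗ (Ta ∘ₗ π))) := by
        simp only [LinearMap.comp_sub, LinearMap.sub_comp, LinearMap.comp_assoc]
        rw [hππ2 (Ta ∘ₗ π)]
        abel
      rw [expand, map_sub, sub_eq_zero]
      have lhs1 : LinearMap.trace ℝ F (π ∘ₗ (T ∘ₗ (Ta ∘ₗ π)))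
          = LinearMap.trace ℝ F ((Ta ∘ₗ T) ∘ₗ π) := by
        rw [cyc]
        rw [show (T ∘ₗ (Ta ∘ₗ π)) ∘ₗ π = T ∘ₗ (Ta ∘ₗ π) by
          simp only [LinearMap.comp_assoc, hππ]]
        rw [← LinearMap.comp_assoc, hn]
      have rhs1 : LinearMap.trace ℝ F (π ∘ₗ (T ∘ₗ (π ∘ₗ (Ta ∘ₗ π))))
          = LinearMap.trace ℝ F ((Ta ∘ₗ T) ∘ₗ π) := by
        rw [show π ∘ₗ (T ∘ₗ (π ∘ₗ (Ta ∘ₗ π))) = (π ∘ₗ (T ∘ₗ π)) ∘ₗ (Ta ∘ₗ π) by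
          simp only [LinearMap.comp_assoc]]
        rw [← hinv, cyc]
        rw [show (Ta ∘ₗ π) ∘ₗ (T ∘ₗ π) = Ta ∘ₗ (π ∘ₗ (T ∘ₗ π)) by
          simp only [LinearMap.comp_assoc]]
        rw [← hinv, ← LinearMap.comp_assoc]
      rw [lhs1, rhs1]
    let bb := stdOrthonormalBasis ℝ F
    rw [trace_eq_sum_inner'' bb] at htr
    have hterm : ∀ i, ⟪bb i, (LinearMap.adjoint C ∘ₗ C) (bb i)⟫ = ‖C (bb i)‖ ^ 2 := by
      intro i
      rw [LinearMap.comp_apply, real_inner_comm, LinearMap.adjoint_inner_left,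
        real_inner_self_eq_norm_sq]
    rw [Finset.sum_congr rfl (fun i _ => hterm i)] at htr
    have hz : ∀ i, C (bb i) = 0 := by
      intro i
      have h1 := (Finset.sum_eq_zero_iff_of_nonneg
        (fun j _ => by positivity)).1 htr i (Finset.mem_univ i)
      have h2 : ‖C (bb i)‖ = 0 := by nlinarith [norm_nonneg (C (bb i))]
      exact norm_eq_zero.1 h2
    apply bb.toBasis.ext
    intro i
    simp only [OrthonormalBasis.coe_toBasis, LinearMap.zero_apply, hz i]
  intro x hx
  have hCx : C x = 0 := by rw [hCzero]; rfl
  rw [hC] at hCx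
  simp only [LinearMap.sub_apply, LinearMap.comp_apply, sub_eq_zero] at hCx
  rw [hπid x hx] at hCx
  rw [show Ta x = π (Ta x) from hCx]
  exact hπmem _

lemma iterBr_congr (br : E →ₗ[ℝ] E →ₗ[ℝ] E) :
    ∀ (i : ℕ) (v w : ℕ → E), (∀ j, j ≤ i → v j = w j) → iterBr br i v = iterBr br i w := by
  intro i
  induction i with
  | zero => intro v w h; exact h 0 le_rfl
  | succ i ih =>
    intro v w h
    show br (v (i+1)) (iterBr br i v) = br (w (i+1)) (iterBr br i w)
    rw [h (i+1) le_rfl, ih v w (fun j hj => h j (hj.trans (Nat.le_succ i)))]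

/-- The flag of spans of iterated brackets of elements of `n`. -/
def brFlag (br : E →ₗ[ℝ] E →ₗ[ℝ] E) (n : Submodule ℝ E) (i : ℕ) : Submodule ℝ E :=
  Submodule.span ℝ {z | ∃ v : ℕ → E, (∀ j, v j ∈ n) ∧ iterBr br i v = z}

lemma brFlag_zero (br : E →ₗ[ℝ] E →ₗ[ℝ] E) (n : Submodule ℝ E) : brFlag br n 0 = n := by
  apply le_antisymm
  · rw [brFlag, Submodule.span_le]
    rintro z ⟨v, hv, rfl⟩
    exact hv 0
  · intro z hz
    exact Submodule.subset_span ⟨fun _ => z, fun _ => hz, rfl⟩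

lemma brFlag_br_mem (br : E →ₗ[ℝ] E →ₗ[ℝ] E) (n : Submodule ℝ E) (i : ℕ)
    {X : E} (hX : X ∈ n) {y : E} (hy : y ∈ brFlag br n i) :
    br X y ∈ brFlag br n (i+1) := by
  refine Submodule.span_induction ?_ ?_ ?_ ?_ hy
  · rintro z ⟨v, hv, rfl⟩
    apply Submodule.subset_span
    refine ⟨Function.update v (i+1) X, ?_, ?_⟩
    · intro j
      rcases eq_or_ne j (i+1) with h | h
      · rw [h, Function.update_self]; exact hX
      · rw [Function.update_of_ne h]; exact hv j
    · show br (Function.update v (i+1) X (i+1)) (iterBr br i (Function.update v (i+1) X)) = _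
      rw [Function.update_self]
      congr 1
      exact iterBr_congr br i _ v (fun j hj => Function.update_of_ne (by omega) _ _)
  · rw [map_zero]; exact Submodule.zero_mem _
  · intro u w _ _ ihu ihw
    rw [map_add]; exact Submodule.add_mem _ ihu ihw
  · intro c u _ ihu
    rw [map_smul]; exact Submodule.smul_mem _ c ihu

end Aux

set_option maxHeartbeats 1000000 in
/-- For a metric solvable Lie algebra `g = a ⊕ n` (orthogonal, `a` abelian, `n`
the nilradical) on which each `ad A|_n`, `A ∈ a`, is normal:
`⟨Ric A, X⟩ = 0` and `⟨Ric A, A⟩ = -tr S(ad A|_n)²`; in particular the Ricci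
operator preserves the decomposition `a ⊕ n`. -/
theorem stmt11 {N : ℕ}
    (br : E →ₗ[ℝ] E →ₗ[ℝ] E)
    (hskew : ∀ X Y, br X Y = - br Y X)
    (hjac : ∀ X Y Z, br X (br Y Z) + br Y (br Z X) + br Z (br X Y) = 0)
    (a n : Submodule ℝ E) (hcompl : IsCompl a n)
    (horth : ∀ x ∈ a, ∀ y ∈ n, ⟪x, y⟫ = 0)
    (habel : ∀ x ∈ a, ∀ y ∈ a, br x y = 0)
    (hideal : ∀ x : E, ∀ y ∈ n, br x y ∈ n)
    (hnilp : ∃ k, ∀ v : ℕ → E, (∀ i, v i ∈ n) → iterBr br k v = 0)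
    (hmax : ∀ m : Submodule ℝ E, (∀ x : E, ∀ y ∈ m, br x y ∈ m) →
      (∃ k, ∀ v : ℕ → E, (∀ i, v i ∈ m) → iterBr br k v = 0) → m ≤ n)
    -- each `ad A|_n` is a normal operator on `n`
    (adn : E → (n →ₗ[ℝ] n))
    (hadn : ∀ A : E, ∀ (x : n), (adn A x : E) = br A x)
    (hnormal : ∀ A ∈ a,
      adn A ∘ₗ LinearMap.adjoint (adn A) = LinearMap.adjoint (adn A) ∘ₗ adn A)
    (b : OrthonormalBasis (Fin N) ℝ E)
    (Hm : E) (hHm : ∀ X : E, ⟪Hm, X⟫ = LinearMap.trace ℝ E (br X)) :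
    (∀ A ∈ a, ∀ X ∈ n, ricForm br b Hm A X = 0) ∧
    (∀ A ∈ a, ricForm br b Hm A A =
      - LinearMap.trace ℝ n
        (((1/2 : ℝ) • (adn A + LinearMap.adjoint (adn A))) ∘ₗ
         ((1/2 : ℝ) • (adn A + LinearMap.adjoint (adn A))))) := by
  classical
  obtain ⟨k, hk⟩ := hnilp
  -- `a` is the orthogonal complement of `n`
  have ha : a = nᗮ := by
    apply Submodule.eq_of_le_of_finrank_eq
    · intro x hx
      rw [Submodule.mem_orthogonal]
      intro u hu
      rw [real_inner_comm]
      exact horth x hx u hu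
    · have h1 := Submodule.finrank_add_eq_of_isCompl hcompl
      have h2 := Submodule.finrank_add_finrank_orthogonal (K := n)
      omega
  set S : ↥n →ₗ[ℝ] E := n.subtype with hS
  set P : E →ₗ[ℝ] ↥n := ((Submodule.orthogonalProjectionOnto n : E →L[ℝ] ↥n) : E →ₗ[ℝ] ↥n) with hP
  have hdecomp : ∀ x : E, x - S (P x) ∈ a := by
    intro x; rw [ha]; exact Submodule.sub_starProjection_mem_orthogonal (K := n) x
  -- all brackets lie in n
  have hbrn : ∀ x y : E, br x y ∈ n := by
    intro x y
    have ex : br x y = br (x - S (P x)) (y - S (P y)) + br (x - S (P x)) (S (P y))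
        + br (S (P x)) (y - S (P y)) + br (S (P x)) (S (P y)) := by
      simp only [map_sub, LinearMap.sub_apply]
      abel
    rw [ex, habel _ (hdecomp x) _ (hdecomp y), zero_add]
    refine n.add_mem (n.add_mem ?_ ?_) ?_
    · exact hideal _ _ (P y).2
    · rw [hskew]; exact n.neg_mem (hideal _ _ (P x).2)
    · exact hideal _ _ (P y).2
  -- factorization of ad A through n
  have hD : ∀ A ∈ a, br A = S ∘ₗ adn A ∘ₗ P := by
    intro A hA
    ext x
    have hx : br A x = br A (x - S (P x)) + br A (S (P x)) := by
      rw [← map_add]; congr 1; abel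
    rw [LinearMap.comp_apply, LinearMap.comp_apply, hx, habel A hA _ (hdecomp x), zero_add]
    exact (hadn A (P x)).symm
  have hadjS : LinearMap.adjoint S = P := by
    symm
    rw [LinearMap.eq_adjoint_iff]
    intro x y
    rw [Submodule.coe_inner]
    show ⟪n.starProjection x, (y : E)⟫ = ⟪x, (y : E)⟫
    rw [Submodule.inner_starProjection_left_eq_right, Submodule.starProjection_eq_self_iff.mpr y.2]
  have hadjP : LinearMap.adjoint P = S := by rw [← hadjS, LinearMap.adjoint_adjoint]
  have hPS : P ∘ₗ S = LinearMap.id := by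
    ext y
    exact congrArg Subtype.val (Submodule.orthogonalProjectionOnto_mem_subspace_eq_self y)
  have hcompfact : ∀ T U : ↥n →ₗ[ℝ] ↥n,
      (S ∘ₗ T ∘ₗ P) ∘ₗ (S ∘ₗ U ∘ₗ P) = S ∘ₗ (T ∘ₗ U) ∘ₗ P := by
    intro T U
    simp only [LinearMap.comp_assoc]
    rw [show P ∘ₗ (S ∘ₗ (U ∘ₗ P)) = U ∘ₗ P by
      rw [← LinearMap.comp_assoc (U ∘ₗ P) S P, hPS, LinearMap.id_comp]]
  have htrfact : ∀ T : ↥n →ₗ[ℝ] ↥n,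
      LinearMap.trace ℝ E (S ∘ₗ T ∘ₗ P) = LinearMap.trace ℝ n T := by
    intro T
    rw [LinearMap.trace_comp_comm' (T ∘ₗ P) S, LinearMap.comp_assoc, hPS, LinearMap.comp_id]
  have hadjD : ∀ A ∈ a, LinearMap.adjoint (br A) = S ∘ₗ LinearMap.adjoint (adn A) ∘ₗ P := by
    intro A hA
    rw [hD A hA, LinearMap.adjoint_comp, LinearMap.adjoint_comp, hadjP, hadjS,
      LinearMap.comp_assoc]
  have hnormE : ∀ A ∈ a, br A ∘ₗ LinearMap.adjoint (br A)
      = LinearMap.adjoint (br A) ∘ₗ br A := by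
    intro A hA
    rw [hadjD A hA, hD A hA, hcompfact, hcompfact, hnormal A hA]
  -- the flag
  have hmk : brFlag br n k = ⊥ := by
    rw [eq_bot_iff, brFlag, Submodule.span_le]
    rintro z ⟨v, hv, rfl⟩
    rw [SetLike.mem_coe, hk v hv]
    exact Submodule.zero_mem ⊥
  have hL2 : ∀ A ∈ a, ∀ i, ∀ y ∈ brFlag br n i, br A y ∈ brFlag br n i := by
    intro A hA i
    induction i with
    | zero =>
      intro y hy
      rw [brFlag_zero] at hy ⊢
      exact hideal A y hy
    | succ i ih =>
      intro y hy
      refine Submodule.span_induction ?_ ?_ ?_ ?_ hy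
      · rintro z ⟨v, hv, rfl⟩
        have hw : iterBr br i v ∈ brFlag br n i := Submodule.subset_span ⟨v, hv, rfl⟩
        have key : br A (iterBr br (i+1) v)
            = br (br A (v (i+1))) (iterBr br i v) + br (v (i+1)) (br A (iterBr br i v)) := by
          have h := hjac A (v (i+1)) (iterBr br i v)
          rw [hskew (iterBr br i v) A, hskew (iterBr br i v) (br A (v (i+1)))] at h
          simp only [map_neg] at h
          have h2 : br A (iterBr br (i+1) v) = br A (br (v (i+1)) (iterBr br i v)) := rfl
          rw [h2, ← sub_eq_zero, ← h]
          abel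
        rw [show iterBr br (i+1) v = br (v (i+1)) (iterBr br i v) from rfl] at key ⊢
        rw [key]
        exact Submodule.add_mem _
          (brFlag_br_mem br n i (hideal A _ (hv (i+1))) hw)
          (brFlag_br_mem br n i (hv (i+1)) (ih _ hw))
      · rw [map_zero]; exact Submodule.zero_mem _
      · intro u w _ _ ihu ihw
        rw [map_add]; exact Submodule.add_mem _ ihu ihw
      · intro c u _ ihu
        rw [map_smul]; exact Submodule.smul_mem _ c ihu
  -- nilpotency and vanishing traces
  have hnilT : ∀ T : E →ₗ[ℝ] E, (∀ i, ∀ y ∈ brFlag br n i, T y ∈ brFlag br n i) →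
      ∀ X ∈ n, LinearMap.trace ℝ E (T ∘ₗ br X) = 0 := by
    intro T hT X hX
    have key : ∀ j (x : E), (((T ∘ₗ br X) : E →ₗ[ℝ] E) ^ (j+1)) x ∈ brFlag br n j := by
      intro j
      induction j with
      | zero =>
        intro x
        rw [pow_one]
        exact hT 0 _ (by rw [brFlag_zero]; exact hbrn X x)
      | succ j ih =>
        intro x
        rw [pow_succ']
        rw [Module.End.mul_apply]
        exact hT (j+1) _ (brFlag_br_mem br n j hX (ih x))
    have hnil : IsNilpotent ((T ∘ₗ br X) : E →ₗ[ℝ] E) := by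
      refine ⟨k+1, ?_⟩
      ext x
      have hx := key k x
      rw [hmk] at hx
      simpa using hx
    exact (LinearMap.isNilpotent_trace_of_isNilpotent hnil).eq_zero
  -- the sum over an orthonormal basis
  have hsum2 : ∀ u w : E, (∑ j, ⟪u, b j⟫ * ⟪w, b j⟫) = ⟪u, w⟫ := by
    intro u w
    rw [← OrthonormalBasis.sum_inner_mul_inner b u w]
    apply Finset.sum_congr rfl
    intro j _
    rw [real_inner_comm w (b j)]
  have e1 : ∀ A X : E, (∑ i, ∑ j, ⟪br A (b i), b j⟫ * ⟪br X (b i), b j⟫)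
      = LinearMap.trace ℝ E (LinearMap.adjoint (br A) ∘ₗ br X) := by
    intro A X
    rw [trace_eq_sum_inner'' b]
    apply Finset.sum_congr rfl
    intro i _
    rw [hsum2, LinearMap.comp_apply, LinearMap.adjoint_inner_right]
  have e2 : ∀ A ∈ a, ∀ y : E, (∑ i, ∑ j, ⟪br (b i) (b j), A⟫ * ⟪br (b i) (b j), y⟫) = 0 := by
    intro A hA y
    apply Finset.sum_eq_zero; intro i _
    apply Finset.sum_eq_zero; intro j _
    rw [real_inner_comm A (br (b i) (b j)), horth A hA _ (hbrn _ _), zero_mul]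
  have hHma : Hm ∈ a := by
    rw [ha, Submodule.mem_orthogonal]
    intro u hu
    rw [real_inner_comm, hHm u]
    rw [show br u = LinearMap.id ∘ₗ br u from (LinearMap.id_comp _).symm]
    exact hnilT LinearMap.id (fun i y hy => hy) u hu
  constructor
  · -- mixed terms vanish
    intro A hA X hX
    have t1 : LinearMap.trace ℝ E (LinearMap.adjoint (br A) ∘ₗ br X) = 0 :=
      hnilT _ (fun i => normal_adj_invariant (br A) (hnormE A hA) _ (hL2 A hA i)) X hX
    have t3 : LinearMap.trace ℝ E (br A ∘ₗ br X) = 0 := hnilT _ (hL2 A hA) X hX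
    simp only [ricForm]
    rw [e1 A X, t1, e2 A hA X, t3, habel Hm hHma A hA, inner_zero_left,
      horth A hA _ (hbrn Hm X)]
    ring
  · -- diagonal value
    intro A hA
    have hDA : LinearMap.adjoint (br A) ∘ₗ br A
        = S ∘ₗ (LinearMap.adjoint (adn A) ∘ₗ adn A) ∘ₗ P := by
      rw [hadjD A hA, hD A hA, hcompfact]
    have hDD : br A ∘ₗ br A = S ∘ₗ (adn A ∘ₗ adn A) ∘ₗ P := by
      rw [hD A hA]; exact hcompfact _ _
    have hexp : LinearMap.trace ℝ n (((1/2 : ℝ) • (adn A + LinearMap.adjoint (adn A))) ∘ₗ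
        ((1/2 : ℝ) • (adn A + LinearMap.adjoint (adn A))))
        = (1/2) * (LinearMap.trace ℝ n (adn A ∘ₗ adn A)
          + LinearMap.trace ℝ n (LinearMap.adjoint (adn A) ∘ₗ adn A)) := by
      rw [LinearMap.smul_comp, LinearMap.comp_smul, map_smul, map_smul]
      rw [LinearMap.add_comp, LinearMap.comp_add, LinearMap.comp_add]
      rw [map_add, map_add, map_add]
      rw [LinearMap.trace_comp_comm' (LinearMap.adjoint (adn A)) (adn A)]
      rw [show LinearMap.trace ℝ n (LinearMap.adjoint (adn A) ∘ₗ LinearMap.adjoint (adn A))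
          = LinearMap.trace ℝ n (adn A ∘ₗ adn A) by
        rw [← LinearMap.adjoint_comp, trace_adjoint'']]
      simp only [smul_eq_mul]
      ring
    simp only [ricForm]
    rw [e1 A A]
    rw [hDA]
    rw [htrfact]
    rw [e2 A hA A]
    rw [hDD]
    rw [htrfact]
    rw [habel Hm hHma A hA]
    rw [inner_zero_left, inner_zero_right, hexp]
    ring
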